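/- For p, u > 0 with p ≠ u define x*(p,u) = ( p·u − p² − p·u·log(u/p) ) / ( p − u + p·log(u/p) ). Then for every fixed p > 0, x*(p,·) is nondecreasing in u: for all 0 < u₁ < u₂ with u₁ ≠ p and u₂ ≠ p, x*(p,u₁) ≤ x*(p,u₂). -/

import Mathlib

/-- The unique maximizer in x of d(p/(p+x) | u/(u+x)) for h(x,p) = p/(p+x). -/
noncomputable def xstar (p u : ℝ) : ℝ :=
  (p * u - p ^ 2 - p * u * Real.log (u / p)) / (p - u + p * Real.log (u / p))

open Real Set

/-- Reduced one-variable function: xstar p u = p * gfun (u/p). -/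
noncomputable def gfun (t : ℝ) : ℝ := (t - 1 - t * Real.log t) / (1 - t + Real.log t)

lemma D_neg {t : ℝ} (ht : 0 < t) (ht1 : t ≠ 1) : 1 - t + Real.log t < 0 := by
  have := Real.log_lt_sub_one_of_pos ht ht1
  linarith

/-- Key inequality: t (log t)^2 ≤ (t-1)^2 for t > 0. -/
lemma key_ineq {t : ℝ} (ht : 0 < t) : t * (Real.log t)^2 ≤ (t-1)^2 := by
  obtain ⟨x, rfl⟩ : ∃ x, t = Real.exp x := ⟨Real.log t, (Real.exp_log ht).symm⟩
  rw [Real.log_exp]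
  have habs : |x| ≤ |2 * Real.sinh (x/2)| := by
    rcases le_or_gt 0 x with h | h
    · have h1 : x/2 ≤ Real.sinh (x/2) := by
        rcases eq_or_lt_of_le h with h' | h'
        · simp [← h']
        · exact le_of_lt ((Real.self_lt_sinh_iff).mpr (by linarith))
      have h2 : 0 ≤ Real.sinh (x/2) := Real.sinh_nonneg_iff.mpr (by linarith)
      rw [abs_of_nonneg h, abs_of_nonneg (by linarith : (0:ℝ) ≤ 2 * Real.sinh (x/2))]
      linarith
    · have h1 : Real.sinh (x/2) < x/2 := (Real.sinh_lt_self_iff).mpr (by linarith)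
      have h2 : Real.sinh (x/2) ≤ 0 := Real.sinh_nonpos_iff.mpr (by linarith)
      rw [abs_of_neg h, abs_of_nonpos (by linarith : 2 * Real.sinh (x/2) ≤ 0)]
      linarith
  have hsq : x^2 ≤ (2 * Real.sinh (x/2))^2 := by
    rw [← sq_abs x, ← sq_abs (2 * Real.sinh (x/2))]
    exact pow_le_pow_left₀ (abs_nonneg _) habs 2
  have hkey : Real.exp x * (2 * Real.sinh (x/2))^2 = (Real.exp x - 1)^2 := by
    rw [Real.sinh_eq]
    have hx : Real.exp x = Real.exp (x/2) * Real.exp (x/2) := by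
      rw [← Real.exp_add]; ring_nf
    have hinv : Real.exp (-(x/2)) = (Real.exp (x/2))⁻¹ := Real.exp_neg _
    have hne : Real.exp (x/2) ≠ 0 := Real.exp_ne_zero _
    rw [hinv, hx]
    field_simp
  have := mul_le_mul_of_nonneg_left hsq (le_of_lt (Real.exp_pos x))
  linarith [hkey ▸ this]

lemma gfun_hasDeriv {t : ℝ} (ht : 0 < t) (ht1 : t ≠ 1) :
    HasDerivAt gfun (((t-1)^2 - t * (Real.log t)^2) / (t * (1 - t + Real.log t)^2)) t := by
  have hN : HasDerivAt (fun t : ℝ => t - 1 - t * Real.log t) (-Real.log t) t := by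
    have h1 := (Real.hasDerivAt_mul_log (ne_of_gt ht))
    have h2 := ((hasDerivAt_id t).sub_const 1).sub h1
    exact h2.congr_deriv (by ring)
  have hD : HasDerivAt (fun t : ℝ => 1 - t + Real.log t) (-1 + t⁻¹) t := by
    have h1 := Real.hasDerivAt_log (ne_of_gt ht)
    have h2 := ((hasDerivAt_const t (1:ℝ)).sub (hasDerivAt_id t)).add h1
    exact h2.congr_deriv (by ring)
  have hDne : 1 - t + Real.log t ≠ 0 := ne_of_lt (D_neg ht ht1)
  have := hN.div hD hDne
  refine this.congr_deriv ?_
  have htne : t ≠ 0 := ne_of_gt ht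
  field_simp
  ring

lemma gfun_deriv_nonneg {t : ℝ} (ht : 0 < t) :
    0 ≤ ((t-1)^2 - t * (Real.log t)^2) / (t * (1 - t + Real.log t)^2) :=
  div_nonneg (by linarith [key_ineq ht]) (by positivity)

lemma gfun_mono_Ioo : MonotoneOn gfun (Ioo (0:ℝ) 1) := by
  apply monotoneOn_of_deriv_nonneg (convex_Ioo 0 1)
  · exact fun t ht =>
      ((gfun_hasDeriv ht.1 (ne_of_lt ht.2)).differentiableAt).continuousAt.continuousWithinAt
  · intro t ht
    rw [interior_Ioo] at ht
    exact ((gfun_hasDeriv ht.1 (ne_of_lt ht.2)).differentiableAt).differentiableWithinAt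
  · intro t ht
    rw [interior_Ioo] at ht
    rw [(gfun_hasDeriv ht.1 (ne_of_lt ht.2)).deriv]
    exact gfun_deriv_nonneg ht.1

lemma gfun_mono_Ioi : MonotoneOn gfun (Ioi (1:ℝ)) := by
  apply monotoneOn_of_deriv_nonneg (convex_Ioi 1)
  · intro t ht
    have ht' : (1:ℝ) < t := ht
    exact ((gfun_hasDeriv (by linarith) (by linarith)).differentiableAt).continuousAt.continuousWithinAt
  · intro t ht
    rw [interior_Ioi] at ht
    have ht' : (1:ℝ) < t := ht
    exact ((gfun_hasDeriv (by linarith) (by linarith)).differentiableAt).differentiableWithinAt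
  · intro t ht
    rw [interior_Ioi] at ht
    have ht' : (1:ℝ) < t := ht
    rw [(gfun_hasDeriv (by linarith) (by linarith)).deriv]
    exact gfun_deriv_nonneg (by linarith)

/-- Auxiliary: h(t) = (1+t) log t - 2(t-1) is monotone on (0,∞). -/
lemma hfun_mono : MonotoneOn (fun t : ℝ => (1 + t) * Real.log t - 2 * (t - 1)) (Ioi 0) := by
  have hder : ∀ t ∈ Ioi (0:ℝ), HasDerivAt (fun t : ℝ => (1 + t) * Real.log t - 2 * (t - 1))
      (Real.log t + t⁻¹ - 1) t := by
    intro t ht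
    have ht' : (0:ℝ) < t := ht
    have h1 : HasDerivAt (fun t : ℝ => (1 + t) * Real.log t)
        (1 * Real.log t + (1 + t) * t⁻¹) t := by
      have := (((hasDerivAt_const t (1:ℝ)).add (hasDerivAt_id t)).mul
        (Real.hasDerivAt_log (ne_of_gt ht')))
      exact this.congr_deriv (by simp only [Pi.add_apply, id_eq]; ring)
    have h2 := h1.sub (((hasDerivAt_id t).sub_const 1).const_mul 2)
    refine h2.congr_deriv ?_
    field_simp
    ring
  apply monotoneOn_of_deriv_nonneg (convex_Ioi 0)
  · exact fun t ht => ((hder t ht).differentiableAt).continuousAt.continuousWithinAt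
  · intro t ht
    rw [interior_Ioi] at ht
    exact ((hder t ht).differentiableAt).differentiableWithinAt
  · intro t ht
    rw [interior_Ioi] at ht
    rw [(hder t ht).deriv]
    have ht' : (0:ℝ) < t := ht
    have := Real.log_le_sub_one_of_pos (inv_pos.mpr ht')
    rw [Real.log_inv] at this
    linarith

lemma gfun_le_one {t : ℝ} (ht : 0 < t) (ht1 : t < 1) : gfun t ≤ 1 := by
  have hD := D_neg ht (ne_of_lt ht1)
  have hh : (1 + t) * Real.log t - 2 * (t - 1) ≤ 0 := by
    have := hfun_mono (mem_Ioi.mpr ht) (mem_Ioi.mpr one_pos) (le_of_lt ht1)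
    simpa using this
  rw [gfun, div_le_one_iff]
  right; right
  exact ⟨hD, by nlinarith⟩

lemma one_le_gfun {t : ℝ} (ht1 : 1 < t) : 1 ≤ gfun t := by
  have ht : (0:ℝ) < t := by linarith
  have hD := D_neg ht (by linarith : t ≠ 1)
  have hh : 0 ≤ (1 + t) * Real.log t - 2 * (t - 1) := by
    have := hfun_mono (mem_Ioi.mpr one_pos) (mem_Ioi.mpr ht) (le_of_lt ht1)
    simpa using this
  rw [gfun, le_div_iff_of_neg hD]
  nlinarith

lemma gfun_mono {t₁ t₂ : ℝ} (h1 : 0 < t₁) (h12 : t₁ < t₂) (hn1 : t₁ ≠ 1) (hn2 : t₂ ≠ 1) :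
    gfun t₁ ≤ gfun t₂ := by
  rcases lt_or_gt_of_ne hn1 with ha | ha
  · rcases lt_or_gt_of_ne hn2 with hb | hb
    · exact gfun_mono_Ioo ⟨h1, ha⟩ ⟨lt_trans h1 h12, hb⟩ (le_of_lt h12)
    · exact le_trans (gfun_le_one h1 ha) (one_le_gfun hb)
  · have hb : 1 < t₂ := lt_trans ha h12
    exact gfun_mono_Ioi (mem_Ioi.mpr ha) (mem_Ioi.mpr hb) (le_of_lt h12)

lemma xstar_eq {p u : ℝ} (hp : 0 < p) : xstar p u = p * gfun (u / p) := by
  have hpne : p ≠ 0 := ne_of_gt hp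
  rw [xstar, gfun]
  have e1 : p * u - p ^ 2 - p * u * Real.log (u / p)
      = p * (p * (u / p - 1 - u / p * Real.log (u / p))) := by
    field_simp
  have e2 : p - u + p * Real.log (u / p) = p * (1 - u / p + Real.log (u / p)) := by
    field_simp
  rw [e1, e2, mul_div_mul_left _ _ hpne, mul_div_assoc]

/-- Lemma B.5: x*(p,u) is nondecreasing in u for fixed p. -/
theorem xstar_mono_in_u (p : ℝ) (hp : 0 < p) :
    ∀ u₁ u₂ : ℝ, 0 < u₁ → u₁ < u₂ → u₁ ≠ p → u₂ ≠ p →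
      xstar p u₁ ≤ xstar p u₂ := by
  intro u₁ u₂ hu1 h12 hn1 hn2
  rw [xstar_eq hp, xstar_eq hp]
  have hgoal : gfun (u₁ / p) ≤ gfun (u₂ / p) := by
    apply gfun_mono
    · positivity
    · gcongr
    · intro h
      exact hn1 (by field_simp at h; linarith)
    · intro h
      exact hn2 (by field_simp at h; linarith)
  exact mul_le_mul_of_nonneg_left hgoal (le_of_lt hp)
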